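/- Let Φ ∈ (C1) and suppose the Φ-entropy H_Φ(Z) = E Φ(Z) − Φ(E Z) is subadditive for functions of two independent random variables. Then for Z a measurable function of independent random variables X₁, X₂, one has E₁[H_Φ(Z | X₁)] ≥ H_Φ(E₁ Z), where E₁ denotes expectation over X₁ and H_Φ(Z | X₁) is the Φ-entropy of Z conditional on X₁ (i.e., with respect to X₂). -/

import Mathlib

open MeasureTheory

/-- A convex function that is continuous on `Ici 0` admits an affine minorant on `Ici 0`. -/
lemma exists_affine_minorant_of_convexOn (Φ : ℝ → ℝ)
    (hΦcont : ContinuousOn Φ (Set.Ici 0)) (hΦconv : ConvexOn ℝ (Set.Ici 0) Φ) :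
    ∃ c d : ℝ, ∀ x : ℝ, 0 ≤ x → c + d * x ≤ Φ x := by
  obtain ⟨x₀, hx₀, hmin⟩ := (isCompact_Icc (a := (0:ℝ)) (b := 1)).exists_isMinOn
    ⟨0, by norm_num⟩ (hΦcont.mono (Set.Icc_subset_Ici_self))
  set B := Φ x₀ with hB
  set d := Φ 1 - Φ 0 with hd
  refine ⟨min B (Φ 1) - |d| - d, d, fun x hx => ?_⟩
  rcases le_or_gt x 1 with hx1 | hx1
  · -- x ∈ [0,1]
    have hBx : B ≤ Φ x := hmin ⟨hx, hx1⟩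
    have h1 : |d * (x - 1)| ≤ |d| := by
      rw [abs_mul]
      have : |x - 1| ≤ 1 := by rw [abs_le]; constructor <;> linarith
      calc |d| * |x - 1| ≤ |d| * 1 := by
            exact mul_le_mul_of_nonneg_left this (abs_nonneg d)
        _ = |d| := mul_one _
    have h2 : d * (x - 1) ≤ |d| := (le_abs_self _).trans h1
    have h3 : min B (Φ 1) ≤ B := min_le_left _ _
    nlinarith
  · -- x > 1 : use the slope inequality between 0 < 1 < x
    have hslope := hΦconv.slope_mono_adjacent (x := 0) (y := 1) (z := x)
      (Set.self_mem_Ici) (le_of_lt (by linarith) : (0:ℝ) ≤ x) one_pos hx1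
    have hx1' : (0:ℝ) < x - 1 := by linarith
    rw [div_le_div_iff₀ (by norm_num) hx1'] at hslope
    have h3 : min B (Φ 1) ≤ Φ 1 := min_le_right _ _
    have h4 : (0:ℝ) ≤ |d| := abs_nonneg d
    nlinarith

/-- Let `Φ` be in the class (C1) and suppose the `Φ`-entropy `H_Φ(Z) = E Φ(Z) − Φ(E Z)` is
subadditive for measurable functions of two independent random variables `X₁, X₂` (modelled on
a product probability space).  Then `E₁[H_Φ(Z | X₁)] ≥ H_Φ(E₁ Z)`, where `E₁` is expectation
over `X₁`, and `H_Φ(Z | X₁)` is the `Φ`-entropy of `Z` with respect to `X₂` (conditional on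
`X₁`). -/
theorem conditional_jensen_from_subadditivity
    {Ω₁ Ω₂ : Type} [MeasurableSpace Ω₁] [MeasurableSpace Ω₂]
    (μ₁ : Measure Ω₁) (μ₂ : Measure Ω₂)
    [IsProbabilityMeasure μ₁] [IsProbabilityMeasure μ₂]
    (Φ : ℝ → ℝ) (hΦcont : ContinuousOn Φ (Set.Ici 0)) (hΦconv : ConvexOn ℝ (Set.Ici 0) Φ)
    (Z : Ω₁ → Ω₂ → ℝ)
    (hZmeas : Measurable fun p : Ω₁ × Ω₂ => Z p.1 p.2)
    (hZnonneg : ∀ ω₁ ω₂, 0 ≤ Z ω₁ ω₂)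
    (hZint : Integrable (fun p : Ω₁ × Ω₂ => Z p.1 p.2) (μ₁.prod μ₂))
    (hΦZint : Integrable (fun p : Ω₁ × Ω₂ => Φ (Z p.1 p.2)) (μ₁.prod μ₂))
    -- subadditivity of the `Φ`-entropy for `n = 2`:
    (hsub : (∫ ω₁, ∫ ω₂, Φ (Z ω₁ ω₂) ∂μ₂ ∂μ₁) - Φ (∫ ω₁, ∫ ω₂, Z ω₁ ω₂ ∂μ₂ ∂μ₁) ≤
      (∫ ω₂, ((∫ ω₁, Φ (Z ω₁ ω₂) ∂μ₁) - Φ (∫ ω₁, Z ω₁ ω₂ ∂μ₁)) ∂μ₂) +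
        ∫ ω₁, ((∫ ω₂, Φ (Z ω₁ ω₂) ∂μ₂) - Φ (∫ ω₂, Z ω₁ ω₂ ∂μ₂)) ∂μ₁) :
    (∫ ω₂, Φ (∫ ω₁, Z ω₁ ω₂ ∂μ₁) ∂μ₂) - Φ (∫ ω₂, ∫ ω₁, Z ω₁ ω₂ ∂μ₁ ∂μ₂) ≤
      ∫ ω₁, ((∫ ω₂, Φ (Z ω₁ ω₂) ∂μ₂) - Φ (∫ ω₂, Z ω₁ ω₂ ∂μ₂)) ∂μ₁ := by
  -- notation
  set h : Ω₂ → ℝ := fun ω₂ => ∫ ω₁, Z ω₁ ω₂ ∂μ₁ with hh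
  set f : Ω₂ → ℝ := fun ω₂ => ∫ ω₁, Φ (Z ω₁ ω₂) ∂μ₁ with hf
  set g : Ω₂ → ℝ := fun ω₂ => Φ (h ω₂) with hg
  -- integrability of h and f
  have hhint : Integrable h μ₂ := hZint.swap.integral_prod_left
  have hfint : Integrable f μ₂ := hΦZint.swap.integral_prod_left
  have hhnn : ∀ ω₂, 0 ≤ h ω₂ := fun ω₂ =>
    integral_nonneg fun ω₁ => hZnonneg ω₁ ω₂
  -- measurability of g via a continuous extension of Φ
  have hΦ' : Continuous fun x : ℝ => Φ (max x 0) := by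
    have hm : Continuous fun x : ℝ => max x 0 := continuous_id.max continuous_const
    exact hΦcont.comp_continuous hm fun x => Set.mem_Ici.mpr (le_max_right _ _)
  have hhsm : AEStronglyMeasurable h μ₂ :=
    hZint.swap.aestronglyMeasurable.integral_prod_right'
  have hgsm : AEStronglyMeasurable g μ₂ := by
    have : AEStronglyMeasurable (fun ω₂ => Φ (max (h ω₂) 0)) μ₂ :=
      (hΦ'.comp_aestronglyMeasurable hhsm)
    refine this.congr (Filter.Eventually.of_forall fun ω₂ => ?_)
    simp [max_eq_left (hhnn ω₂), hg]
  -- a.e. Jensen: g ≤ f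
  have hZae : ∀ᵐ ω₂ ∂μ₂, Integrable (fun ω₁ => Z ω₁ ω₂) μ₁ := hZint.prod_left_ae
  have hΦZae : ∀ᵐ ω₂ ∂μ₂, Integrable (fun ω₁ => Φ (Z ω₁ ω₂)) μ₁ := hΦZint.prod_left_ae
  have hjensen : ∀ᵐ ω₂ ∂μ₂, g ω₂ ≤ f ω₂ := by
    filter_upwards [hZae, hΦZae] with ω₂ h1 h2
    exact hΦconv.map_integral_le hΦcont isClosed_Ici
      (Filter.Eventually.of_forall fun ω₁ => hZnonneg ω₁ ω₂) h1 h2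
  -- affine minorant gives the lower bound on g
  obtain ⟨c, d, hcd⟩ := exists_affine_minorant_of_convexOn Φ hΦcont hΦconv
  have hlow : ∀ ω₂, c + d * h ω₂ ≤ g ω₂ := fun ω₂ => hcd _ (hhnn ω₂)
  have hlowint : Integrable (fun ω₂ => c + d * h ω₂) μ₂ :=
    (integrable_const c).add (hhint.const_mul d)
  -- hence g is integrable
  have hgint : Integrable g μ₂ :=
    integrable_of_le_of_le hgsm
      (Filter.Eventually.of_forall hlow) hjensen hlowint hfint
  -- split the first integral in hsub
  have hsplit : (∫ ω₂, ((∫ ω₁, Φ (Z ω₁ ω₂) ∂μ₁) - Φ (∫ ω₁, Z ω₁ ω₂ ∂μ₁)) ∂μ₂)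
      = (∫ ω₂, f ω₂ ∂μ₂) - ∫ ω₂, g ω₂ ∂μ₂ := integral_sub hfint hgint
  -- Fubini swaps
  have hswap1 : (∫ ω₁, ∫ ω₂, Φ (Z ω₁ ω₂) ∂μ₂ ∂μ₁) = ∫ ω₂, f ω₂ ∂μ₂ :=
    integral_integral_swap hΦZint
  have hswap2 : (∫ ω₁, ∫ ω₂, Z ω₁ ω₂ ∂μ₂ ∂μ₁) = ∫ ω₂, ∫ ω₁, Z ω₁ ω₂ ∂μ₁ ∂μ₂ :=
    integral_integral_swap hZint
  rw [hsplit, hswap1, hswap2] at hsub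
  linarith
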